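/- arXiv:2303.02790 — 3 statements merged into one kernel-verified Lean document; each statement's English description precedes it below -/
import Mathlib

section
/- There is a constant C_ξ > 0, depending only on ξ, such that the following holds. Let a > 0, K ∈ ℕ with K ≥ 1, L = K a, M > 0 with M a ≥ 1, and 0 ≤ ξ < 1. With 𝒦 = {2πn/L : n ∈ ℤ^4} ∩ [-π/a, π/a)^4, σ_μ(k) = (e^{i k_μ a} - 1)/a, |σ(k)|^2 = Σ_μ |σ_μ(k)|^2, and g^A_{μν}(x,y) = (1/L^4) Σ_{k∈𝒦} e^{i k·(x-y)} (|σ(k)|^2 + M^2)^{-1} (δ_{μν} + ξ conj(σ_μ(k)) σ_ν(k)/((1-ξ)|σ(k)|^2 + M^2)) for x,y in Λ = aℤ^4 ∩ [0,L)^4, one has a^4 Σ_{x∈Λ} |g^A_{μν}(x,y)| ≤ C_ξ M^{-2} for every y ∈ Λ and every μ,ν, uniformly in L. -/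
open scoped Real

/-- The lattice symbol `σ_μ(k) = (e^{i k_μ a} - 1)/a`. -/
noncomputable def latticeSigma (a : ℝ) (k : Fin 4 → ℝ) (μ : Fin 4) : ℂ :=
  (Complex.exp (Complex.I * (k μ * a)) - 1) / a

/-- `|σ(k)|² = ∑_μ |σ_μ(k)|²`. -/
noncomputable def latticeSigmaSq (a : ℝ) (k : Fin 4 → ℝ) : ℝ :=
  ∑ μ : Fin 4, Complex.normSq (latticeSigma a k μ)

/-- The momentum-space covariance
`(|σ(k)|² + M²)⁻¹ (δ_{μν} + ξ conj(σ_μ(k)) σ_ν(k) / ((1-ξ)|σ(k)|² + M²))`. -/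
noncomputable def covEntry (a M ξ : ℝ) (k : Fin 4 → ℝ) (μ ν : Fin 4) : ℂ :=
  (((latticeSigmaSq a k + M ^ 2)⁻¹ : ℝ) : ℂ) *
    ((if μ = ν then 1 else 0) +
      (ξ : ℂ) * (starRingEnd ℂ (latticeSigma a k μ)) * latticeSigma a k ν /
        ((((1 - ξ) * latticeSigmaSq a k + M ^ 2 : ℝ)) : ℂ))

/-- The bosonic momenta: integers `m` with `2πm/L ∈ [-π/a, π/a)`, i.e. `-K ≤ 2m < K`. -/
noncomputable def bosonMom (K : ℕ) : Finset ℤ :=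
  (Finset.Ico (-(K : ℤ)) (K : ℤ)).filter (fun m => -(K : ℤ) ≤ 2 * m ∧ 2 * m < (K : ℤ))

/-- The position-space covariance of the non-compact massive lattice `U(1)` field,
`g^A_{μν}(x,y) = L⁻⁴ ∑_{k ∈ 𝒦} e^{i k⋅(x-y)} covEntry(k)_{μν}`, with `L = K a` and
`k = 2πm/L`, `m ∈ bosonMom K`. -/
noncomputable def gaugeCov (a : ℝ) (K : ℕ) (M ξ : ℝ) (μ ν : Fin 4) (x y : Fin 4 → ℝ) : ℂ :=
  (((K : ℝ) * a) ^ 4)⁻¹ *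
    ∑ m ∈ Fintype.piFinset (fun _ : Fin 4 => bosonMom K),
      Complex.exp (Complex.I *
          ((∑ ρ : Fin 4, (2 * π * (m ρ : ℝ) / ((K : ℝ) * a)) * (x ρ - y ρ) : ℝ) : ℂ)) *
        covEntry a M ξ (fun ρ => 2 * π * (m ρ : ℝ) / ((K : ℝ) * a)) μ ν

noncomputable def ph (K : ℕ) (n : ℤ) : ℂ := Complex.exp (2 * π * Complex.I * (n : ℂ) / K)

lemma bosonMom_eq (K : ℕ) : bosonMom K = Finset.Ico (-((K : ℤ)/2)) (-((K : ℤ)/2) + K) := by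
  ext m
  simp only [bosonMom, Finset.mem_filter, Finset.mem_Ico]
  omega

lemma ph_add (K : ℕ) (x y : ℤ) : ph K (x + y) = ph K x * ph K y := by
  rw [ph, ph, ph, ← Complex.exp_add]
  congr 1
  push_cast
  ring

lemma ph_zero (K : ℕ) : ph K 0 = 1 := by
  simp [ph]

lemma ph_sum {ι : Type*} (K : ℕ) (s : Finset ι) (f : ι → ℤ) :
    ph K (∑ i ∈ s, f i) = ∏ i ∈ s, ph K (f i) := by
  classical
  induction s using Finset.induction with
  | empty => simp [ph_zero]
  | insert _ _ h ih => rw [Finset.sum_insert h, Finset.prod_insert h, ph_add, ih]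

lemma ph_eq_one_of_dvd {K : ℕ} (hK : 1 ≤ K) {n : ℤ} (h : (K : ℤ) ∣ n) : ph K n = 1 := by
  obtain ⟨q, rfl⟩ := h
  rw [ph]
  have hKne : (K : ℂ) ≠ 0 := Nat.cast_ne_zero.2 (by omega)
  have : 2 * π * Complex.I * ((K : ℤ) * q : ℤ) / K = (q : ℂ) * (2 * π * Complex.I) := by
    push_cast
    field_simp
  rw [this, Complex.exp_int_mul_two_pi_mul_I]

lemma ph_ne_one {K : ℕ} (hK : 1 ≤ K) {l : ℤ} (h : ¬ (K : ℤ) ∣ l) : ph K l ≠ 1 := by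
  intro hcon
  rw [ph, Complex.exp_eq_one_iff] at hcon
  obtain ⟨n, hn⟩ := hcon
  have hKne : (K : ℂ) ≠ 0 := Nat.cast_ne_zero.2 (by omega)
  have hπ : (π : ℂ) ≠ 0 := by exact_mod_cast Real.pi_ne_zero
  have hl : (l : ℂ) = (n : ℂ) * K := by
    field_simp at hn
    have hI : Complex.I ≠ 0 := Complex.I_ne_zero
    -- 2 π I l = n 2 π I K
    have := hn
    -- cancel 2 π I
    apply mul_left_cancel₀ (a := 2 * (π:ℂ) * Complex.I) (by simp [hπ, hI])
    linear_combination (2 * (π:ℂ) * Complex.I) * this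
  have : l = n * K := by exact_mod_cast hl
  exact h ⟨n, by linarith [this]⟩

lemma ph_pow (K : ℕ) (i : ℕ) (l : ℤ) : ph K ((i : ℤ) * l) = (ph K l) ^ i := by
  rw [ph, ph, ← Complex.exp_nat_mul]
  congr 1
  push_cast
  ring

lemma sum_range_ph {K : ℕ} (hK : 1 ≤ K) (l : ℤ) :
    ∑ i ∈ Finset.range K, ph K ((i : ℤ) * l) = if (K : ℤ) ∣ l then (K : ℂ) else 0 := by
  by_cases h : (K : ℤ) ∣ l
  · simp only [h, if_true]
    have : ∀ i ∈ Finset.range K, ph K ((i : ℤ) * l) = 1 := fun i _ =>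
      ph_eq_one_of_dvd hK (Dvd.dvd.mul_left h _)
    rw [Finset.sum_congr rfl this]
    simp
  · simp only [h, if_false]
    have hne := ph_ne_one hK h
    calc ∑ i ∈ Finset.range K, ph K ((i : ℤ) * l) = ∑ i ∈ Finset.range K, (ph K l) ^ i := by
          exact Finset.sum_congr rfl fun i _ => ph_pow K i l
      _ = ((ph K l) ^ K - 1) / (ph K l - 1) := geom_sum_eq hne K
      _ = 0 := by
          have : (ph K l) ^ K = 1 := by
            rw [← ph_pow]
            exact ph_eq_one_of_dvd hK ⟨l, by ring⟩
          rw [this]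
          simp

lemma sum_fin_ph {K : ℕ} (hK : 1 ≤ K) (l : ℤ) :
    ∑ j : Fin K, ph K (l * (j : ℤ)) = if (K : ℤ) ∣ l then (K : ℂ) else 0 := by
  rw [← sum_range_ph hK l]
  rw [← Fin.sum_univ_eq_sum_range (fun i => ph K ((i : ℤ) * l)) K]
  exact Finset.sum_congr rfl fun j _ => by rw [mul_comm]

lemma sum_boson_ph {K : ℕ} (hK : 1 ≤ K) (l : ℤ) :
    ∑ m ∈ bosonMom K, ph K (m * l) = if (K : ℤ) ∣ l then (K : ℂ) else 0 := by
  set m0 : ℤ := -((K : ℤ)/2) with hm0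
  have : ∑ m ∈ bosonMom K, ph K (m * l) = ∑ i ∈ Finset.range K, ph K ((m0 + i) * l) := by
    rw [bosonMom_eq]
    apply Finset.sum_nbij' (fun m => (m - m0).toNat) (fun i => m0 + (i : ℤ))
    · intro x hx
      simp only [Finset.mem_Ico] at hx
      simp only [Finset.mem_range]
      omega
    · intro x hx
      simp only [Finset.mem_range] at hx
      simp only [Finset.mem_Ico]
      omega
    · intro x hx
      simp only [Finset.mem_Ico] at hx
      omega
    · intro x hx
      simp only [Finset.mem_range] at hx
      omega
    · intro x hx
      simp only [Finset.mem_Ico] at hx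
      have h2 : (m0 + ((x - m0).toNat : ℤ)) = x := by omega
      rw [h2]
  rw [this]
  have expand : ∀ i ∈ Finset.range K, ph K ((m0 + i) * l) = ph K (m0 * l) * ph K ((i:ℤ) * l) := by
    intro i _
    rw [← ph_add]
    congr 1
    ring
  rw [Finset.sum_congr rfl expand, ← Finset.mul_sum, sum_range_ph hK l]
  by_cases h : (K : ℤ) ∣ l
  · simp only [h, if_true]
    rw [ph_eq_one_of_dvd hK (Dvd.dvd.mul_left h _), one_mul]
  · simp [h]

lemma orth4_boson {K : ℕ} (hK : 1 ≤ K) (l : Fin 4 → ℤ) :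
    ∑ m ∈ Fintype.piFinset (fun _ : Fin 4 => bosonMom K), ph K (∑ ρ, m ρ * l ρ) =
      ∏ ρ, (if (K : ℤ) ∣ l ρ then (K : ℂ) else 0) := by
  have : ∀ m : Fin 4 → ℤ, ph K (∑ ρ, m ρ * l ρ) = ∏ ρ, ph K (m ρ * l ρ) := fun m =>
    ph_sum K Finset.univ _
  rw [Finset.sum_congr rfl (fun m _ => this m),
    ← Finset.prod_univ_sum (fun _ : Fin 4 => bosonMom K) (fun ρ x => ph K (x * l ρ))]
  exact Finset.prod_congr rfl fun ρ _ => sum_boson_ph hK (l ρ)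

lemma normSq_exp_sub_one (θ : ℝ) :
    Complex.normSq (Complex.exp (Complex.I * θ) - 1) = 2 - 2 * Real.cos θ := by
  have : Complex.I * (θ : ℂ) = (θ : ℂ) * Complex.I := by ring
  rw [this, Complex.exp_mul_I]
  have h1 : Complex.cos (θ : ℂ) = (Real.cos θ : ℂ) := (Complex.ofReal_cos θ).symm
  have h2 : Complex.sin (θ : ℂ) = (Real.sin θ : ℂ) := (Complex.ofReal_sin θ).symm
  rw [h1, h2]
  rw [Complex.normSq_apply]
  simp only [Complex.add_re, Complex.add_im, Complex.ofReal_re, Complex.ofReal_im,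
    Complex.mul_re, Complex.mul_im, Complex.I_re, Complex.I_im, Complex.sub_re, Complex.sub_im,
    Complex.one_re, Complex.one_im]
  have := Real.sin_sq_add_cos_sq θ
  nlinarith [this]

lemma sigma_val (a : ℝ) (ha : a ≠ 0) (K : ℕ) (hK : 1 ≤ K) (m : Fin 4 → ℤ) (ρ : Fin 4) :
    latticeSigma a (fun σ => 2 * π * (m σ : ℝ) / ((K : ℝ) * a)) ρ =
      (ph K (m ρ) - 1) / (a : ℂ) := by
  rw [latticeSigma, ph]
  have hKne : (K : ℂ) ≠ 0 := Nat.cast_ne_zero.2 (by omega)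
  have haC : (a : ℂ) ≠ 0 := Complex.ofReal_ne_zero.2 ha
  have harg : Complex.I * ((↑(2 * π * (m ρ : ℝ) / ((K : ℝ) * a)) : ℂ) * (a : ℂ))
      = 2 * ↑π * Complex.I * ((m ρ : ℤ) : ℂ) / (K : ℂ) := by
    push_cast
    field_simp
  rw [harg]

lemma sigmaSq_eq (a : ℝ) (ha : a ≠ 0) (K : ℕ) (hK : 1 ≤ K) (m : Fin 4 → ℤ) :
    latticeSigmaSq a (fun σ => 2 * π * (m σ : ℝ) / ((K : ℝ) * a)) =
      (8 - 2 * (∑ ρ, Real.cos (2 * π * (m ρ : ℝ) / K))) / a ^ 2 := by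
  rw [latticeSigmaSq]
  have hKne : (K : ℝ) ≠ 0 := Nat.cast_ne_zero.2 (by omega)
  have key : ∀ ρ : Fin 4, Complex.normSq (latticeSigma a (fun σ => 2 * π * (m σ : ℝ) / ((K:ℝ) * a)) ρ)
      = (2 - 2 * Real.cos (2 * π * (m ρ : ℝ) / K)) / a ^ 2 := by
    intro ρ
    rw [latticeSigma]
    rw [map_div₀]
    have haC : (a : ℂ) ≠ 0 := Complex.ofReal_ne_zero.2 ha
    have hKC : (K : ℂ) ≠ 0 := Nat.cast_ne_zero.2 (by omega)
    have harg : ((↑(2 * π * (m ρ : ℝ) / ((K : ℝ) * a)) : ℂ) * (a : ℂ)) = ((2 * π * (m ρ : ℝ) / K : ℝ) : ℂ) := by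
      push_cast
      field_simp
    rw [harg, normSq_exp_sub_one, Complex.normSq_ofReal]
    ring
  rw [Finset.sum_congr rfl (fun ρ _ => key ρ)]
  rw [← Finset.sum_div]
  congr 1
  rw [Finset.sum_sub_distrib, Finset.mul_sum]
  norm_num

lemma cos_eq_ph (K : ℕ) (n : ℤ) :
    ((Real.cos (2 * π * (n : ℝ) / K) : ℝ) : ℂ) = (ph K n + ph K (-n)) / 2 := by
  rw [Complex.ofReal_cos, Complex.cos]
  congr 2
  · rw [ph]
    congr 1
    push_cast
    ring
  · rw [ph]
    congr 1
    push_cast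
    ring

lemma cosSum_eq (K : ℕ) (m : Fin 4 → ℤ) :
    ((∑ ρ, Real.cos (2 * π * (m ρ : ℝ) / K) : ℝ) : ℂ)
      = ∑ p : Fin 4 × Bool, (1 / 2 : ℂ) * ph K ((if p.2 then 1 else -1) * m p.1) := by
  rw [Fintype.sum_prod_type, Complex.ofReal_sum]
  refine Finset.sum_congr rfl fun ρ _ => ?_
  rw [cos_eq_ph]
  rw [Fintype.sum_bool]
  have h1 : ((if (true : Bool) = true then (1:ℤ) else -1) * m ρ) = m ρ := by simp
  have h2 : ((if (false : Bool) = true then (1:ℤ) else -1) * m ρ) = -m ρ := by simp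
  rw [h1, h2]
  ring

lemma core_pos {K : ℕ} (hK : 1 ≤ K) (j : Fin 4 → ℤ) (n : ℕ) :
    ∃ t : ℝ, 0 ≤ t ∧
      ∑ m ∈ Fintype.piFinset (fun _ : Fin 4 => bosonMom K),
        ph K (∑ ρ, m ρ * j ρ) * (((∑ ρ, Real.cos (2 * π * (m ρ : ℝ) / K)) : ℝ) : ℂ) ^ n
        = (t : ℂ) := by
  classical
  set sgn : Fin 4 × Bool → ℤ := fun p => if p.2 then 1 else -1 with hsgn
  set v : (Fin n → Fin 4 × Bool) → Fin 4 → ℤ :=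
    fun w ρ => ∑ t : Fin n, if (w t).1 = ρ then sgn (w t) else 0 with hv
  have hsum_id : ∀ (m : Fin 4 → ℤ) (w : Fin n → Fin 4 × Bool),
      (∑ ρ, m ρ * (j ρ + v w ρ))
        = (∑ ρ, m ρ * j ρ) + (∑ t : Fin n, sgn (w t) * m (w t).1) := by
    intro m w
    have h2 : ∑ ρ, m ρ * v w ρ = ∑ t : Fin n, sgn (w t) * m (w t).1 := by
      simp only [hv, Finset.mul_sum]
      rw [Finset.sum_comm]
      refine Finset.sum_congr rfl fun t _ => ?_
      have : ∀ ρ : Fin 4, m ρ * (if (w t).1 = ρ then sgn (w t) else 0)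
          = (if (w t).1 = ρ then sgn (w t) * m ρ else 0) := by
        intro ρ
        split <;> ring
      rw [Finset.sum_congr rfl fun ρ _ => this ρ]
      rw [Finset.sum_ite_eq]
      simp
    calc (∑ ρ, m ρ * (j ρ + v w ρ)) = ∑ ρ, (m ρ * j ρ + m ρ * v w ρ) := by
          refine Finset.sum_congr rfl fun ρ _ => by ring
      _ = (∑ ρ, m ρ * j ρ) + ∑ ρ, m ρ * v w ρ := Finset.sum_add_distrib
      _ = _ := by rw [h2]
  have stepA : ∀ m : Fin 4 → ℤ,
      ph K (∑ ρ, m ρ * j ρ) * (((∑ ρ, Real.cos (2 * π * (m ρ : ℝ) / K)) : ℝ) : ℂ) ^ n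
        = ∑ w : Fin n → Fin 4 × Bool, (1 / 2 : ℂ) ^ n * ph K (∑ ρ, m ρ * (j ρ + v w ρ)) := by
    intro m
    rw [cosSum_eq]
    have h1 : (∑ p : Fin 4 × Bool, (1 / 2 : ℂ) * ph K (sgn p * m p.1)) ^ n
        = ∏ _t : Fin n, ∑ p : Fin 4 × Bool, (1 / 2 : ℂ) * ph K (sgn p * m p.1) := by
      rw [Finset.prod_const, Finset.card_univ, Fintype.card_fin]
    rw [h1, Finset.prod_univ_sum (fun _ : Fin n => (Finset.univ : Finset (Fin 4 × Bool)))
      (fun _ p => (1 / 2 : ℂ) * ph K (sgn p * m p.1)), Fintype.piFinset_univ, Finset.mul_sum]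
    refine Finset.sum_congr rfl fun w _ => ?_
    rw [Finset.prod_mul_distrib, Finset.prod_const, Finset.card_univ, Fintype.card_fin]
    have h3 : ∏ t : Fin n, ph K (sgn (w t) * m (w t).1)
        = ph K (∑ t : Fin n, sgn (w t) * m (w t).1) := (ph_sum K Finset.univ _).symm
    rw [h3, hsum_id m w, ph_add]
    ring
  rw [Finset.sum_congr rfl fun m _ => stepA m]
  rw [Finset.sum_comm]
  have stepB : ∀ w : Fin n → Fin 4 × Bool,
      ∑ m ∈ Fintype.piFinset (fun _ : Fin 4 => bosonMom K),
        (1 / 2 : ℂ) ^ n * ph K (∑ ρ, m ρ * (j ρ + v w ρ))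
      = (((1 / 2 : ℝ) ^ n * ∏ ρ, (if (K : ℤ) ∣ (j ρ + v w ρ) then (K : ℝ) else 0) : ℝ) : ℂ) := by
    intro w
    rw [← Finset.mul_sum, orth4_boson hK (fun ρ => j ρ + v w ρ)]
    push_cast [apply_ite (fun x : ℝ => (x : ℂ))]
    norm_num
  rw [Finset.sum_congr rfl fun w _ => stepB w]
  refine ⟨∑ w : Fin n → Fin 4 × Bool,
    ((1 / 2 : ℝ) ^ n * ∏ ρ, (if (K : ℤ) ∣ (j ρ + v w ρ) then (K : ℝ) else 0)), ?_, ?_⟩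
  · refine Finset.sum_nonneg fun w _ => ?_
    refine mul_nonneg (by positivity) (Finset.prod_nonneg fun ρ _ => ?_)
    split
    · positivity
    · exact le_refl 0
  · exact (Complex.ofReal_sum _ _).symm

noncomputable def Gfun (a : ℝ) (K : ℕ) (M c : ℝ) (j : Fin 4 → ℤ) : ℂ :=
  ∑ m ∈ Fintype.piFinset (fun _ : Fin 4 => bosonMom K),
    ph K (∑ ρ, m ρ * j ρ) *
      (((c * latticeSigmaSq a (fun σ => 2 * π * (m σ : ℝ) / ((K : ℝ) * a)) + M ^ 2)⁻¹ : ℝ) : ℂ)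

lemma ph_eq_ofReal_mul_I (K : ℕ) (n : ℤ) :
    ph K n = Complex.exp ((2 * π * (n : ℝ) / K : ℝ) * Complex.I) := by
  rw [ph]
  congr 1
  push_cast
  ring

lemma ph_norm (K : ℕ) (n : ℤ) : ‖ph K n‖ = 1 := by
  rw [ph_eq_ofReal_mul_I]
  exact Complex.norm_exp_ofReal_mul_I _

lemma Gpos (a : ℝ) (ha : 0 < a) {K : ℕ} (hK : 1 ≤ K) (M : ℝ) (hM : 0 < M) (c : ℝ) (hc : 0 < c)
    (j : Fin 4 → ℤ) : ∃ t : ℝ, 0 ≤ t ∧ Gfun a K M c j = (t : ℂ) := by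
  classical
  set D : ℝ := 8 * c / a ^ 2 + M ^ 2 with hD
  set E : ℝ := 2 * c / a ^ 2 with hE
  have hDpos : 0 < D := by positivity
  have hEpos : 0 < E := by positivity
  set S : (Fin 4 → ℤ) → ℝ := fun m => ∑ ρ, Real.cos (2 * π * (m ρ : ℝ) / K) with hS
  have hSbound : ∀ m, |S m| ≤ 4 := by
    intro m
    calc |S m| ≤ ∑ ρ : Fin 4, |Real.cos (2 * π * (m ρ : ℝ) / K)| :=
          Finset.abs_sum_le_sum_abs _ _
      _ ≤ ∑ _ρ : Fin 4, (1 : ℝ) := Finset.sum_le_sum fun ρ _ => Real.abs_cos_le_one _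
      _ = 4 := by norm_num
  set q : ℝ := 4 * E / D with hq
  have hq0 : 0 ≤ q := by positivity
  have hq1 : q < 1 := by
    rw [hq, div_lt_one hDpos, hD, hE]
    have : 0 < M ^ 2 := by positivity
    have h8 : 4 * (2 * c / a ^ 2) = 8 * c / a ^ 2 := by ring
    linarith [h8]
  have hkey : ∀ m : Fin 4 → ℤ,
      c * latticeSigmaSq a (fun σ => 2 * π * (m σ : ℝ) / ((K : ℝ) * a)) + M ^ 2
        = D - E * S m := by
    intro m
    rw [sigmaSq_eq a (ne_of_gt ha) K hK m, hD, hE, hS]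
    field_simp
    ring
  have hbnd : ∀ (m : Fin 4 → ℤ) (n : ℕ),
      ‖ph K (∑ ρ, m ρ * j ρ) * ((E ^ n * (S m) ^ n / D ^ (n + 1) : ℝ) : ℂ)‖
        ≤ D⁻¹ * q ^ n := by
    intro m n
    rw [norm_mul, ph_norm, one_mul, Complex.norm_real, Real.norm_eq_abs]
    have h1 : |E ^ n * S m ^ n / D ^ (n + 1)| = E ^ n * |S m| ^ n / D ^ (n + 1) := by
      rw [abs_div, abs_mul, abs_pow, abs_pow, abs_of_pos hEpos, abs_of_pos (pow_pos hDpos _)]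
    rw [h1]
    have h2 : |S m| ^ n ≤ 4 ^ n := pow_le_pow_left₀ (abs_nonneg _) (hSbound m) n
    have h3 : E ^ n * |S m| ^ n / D ^ (n + 1) ≤ E ^ n * 4 ^ n / D ^ (n + 1) := by
      gcongr
    refine h3.trans (le_of_eq ?_)
    have hqn : q ^ n = 4 ^ n * E ^ n / D ^ n := by
      rw [hq, div_pow, mul_pow]
    rw [hqn, pow_succ]
    field_simp
  have hgeo : Summable (fun n : ℕ => D⁻¹ * q ^ n) :=
    (summable_geometric_of_lt_one hq0 hq1).mul_left _
  have hsummable_m : ∀ m : Fin 4 → ℤ, Summable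
      (fun n : ℕ => ph K (∑ ρ, m ρ * j ρ) * ((E ^ n * (S m) ^ n / D ^ (n + 1) : ℝ) : ℂ)) := by
    intro m
    exact Summable.of_norm_bounded hgeo (hbnd m)
  have hinv : ∀ m : Fin 4 → ℤ,
      ((c * latticeSigmaSq a (fun σ => 2 * π * (m σ : ℝ) / ((K : ℝ) * a)) + M ^ 2)⁻¹ : ℝ)
        = ∑' n : ℕ, E ^ n * (S m) ^ n / D ^ (n + 1) := by
    intro m
    rw [hkey m]
    have hr : ‖E * S m / D‖ < 1 := by
      rw [Real.norm_eq_abs, abs_div, abs_of_pos hDpos, abs_mul, abs_of_pos hEpos,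
        div_lt_one hDpos]
      calc E * |S m| ≤ E * 4 := by nlinarith [hSbound m, abs_nonneg (S m)]
        _ = 4 * E := by ring
        _ < D := by rw [← div_lt_one hDpos] at *; exact hq1
    have hterm : ∀ n : ℕ, E ^ n * (S m) ^ n / D ^ (n + 1) = D⁻¹ * (E * S m / D) ^ n := by
      intro n
      rw [pow_succ]
      ring
    rw [tsum_congr hterm, tsum_mul_left, tsum_geometric_of_norm_lt_one hr]
    rw [← mul_inv]
    congr 1
    field_simp
  choose t ht0 htEq using fun n => core_pos hK j n
  set u : ℕ → ℝ := fun n => E ^ n / D ^ (n + 1) * t n with hu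
  have hu0 : ∀ n, 0 ≤ u n := fun n => mul_nonneg (by positivity) (ht0 n)
  have hterm2 : ∀ n : ℕ,
      (∑ m ∈ Fintype.piFinset (fun _ : Fin 4 => bosonMom K),
        ph K (∑ ρ, m ρ * j ρ) * ((E ^ n * (S m) ^ n / D ^ (n + 1) : ℝ) : ℂ)) = ((u n : ℝ) : ℂ) := by
    intro n
    have hper : ∀ m ∈ Fintype.piFinset (fun _ : Fin 4 => bosonMom K),
        ph K (∑ ρ, m ρ * j ρ) * ((E ^ n * (S m) ^ n / D ^ (n + 1) : ℝ) : ℂ)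
          = ((E ^ n / D ^ (n + 1) : ℝ) : ℂ) * (ph K (∑ ρ, m ρ * j ρ) * ((S m : ℝ) : ℂ) ^ n) := by
      intro m _
      push_cast
      ring
    rw [Finset.sum_congr rfl hper, ← Finset.mul_sum, htEq n, hu]
    push_cast
    ring
  have hGeq : Gfun a K M c j = ∑' n : ℕ, ((u n : ℝ) : ℂ) := by
    rw [Gfun]
    have h1 : ∀ m ∈ Fintype.piFinset (fun _ : Fin 4 => bosonMom K),
        ph K (∑ ρ, m ρ * j ρ) *
          (((c * latticeSigmaSq a (fun σ => 2 * π * (m σ : ℝ) / ((K : ℝ) * a)) + M ^ 2)⁻¹ : ℝ) : ℂ)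
        = ∑' n : ℕ, ph K (∑ ρ, m ρ * j ρ) * ((E ^ n * (S m) ^ n / D ^ (n + 1) : ℝ) : ℂ) := by
      intro m _
      rw [hinv m, Complex.ofReal_tsum, ← tsum_mul_left]
    rw [Finset.sum_congr rfl h1, ← Summable.tsum_finsetSum (fun m _ => hsummable_m m)]
    exact tsum_congr fun n => by rw [Finset.sum_congr rfl (fun m _ => rfl), hterm2 n]
  have hucard : ∀ n, |u n| ≤ ((Fintype.piFinset (fun _ : Fin 4 => bosonMom K)).card : ℝ) * (D⁻¹ * q ^ n) := by
    intro n
    have : |u n| = ‖((u n : ℝ) : ℂ)‖ := by rw [Complex.norm_real, Real.norm_eq_abs]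
    rw [this, ← hterm2 n]
    calc ‖∑ m ∈ Fintype.piFinset (fun _ : Fin 4 => bosonMom K),
          ph K (∑ ρ, m ρ * j ρ) * ((E ^ n * (S m) ^ n / D ^ (n + 1) : ℝ) : ℂ)‖
        ≤ ∑ m ∈ Fintype.piFinset (fun _ : Fin 4 => bosonMom K),
            ‖ph K (∑ ρ, m ρ * j ρ) * ((E ^ n * (S m) ^ n / D ^ (n + 1) : ℝ) : ℂ)‖ :=
          norm_sum_le _ _
      _ ≤ ∑ _m ∈ Fintype.piFinset (fun _ : Fin 4 => bosonMom K), D⁻¹ * q ^ n :=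
          Finset.sum_le_sum fun m _ => hbnd m n
      _ = _ := by rw [Finset.sum_const, nsmul_eq_mul]
  have hSummu : Summable u := by
    refine Summable.of_norm_bounded
      (g := fun n => ((Fintype.piFinset fun _ : Fin 4 => bosonMom K).card : ℝ) * (D⁻¹ * q ^ n))
      (hgeo.mul_left _) ?_
    intro n
    rw [Real.norm_eq_abs]
    exact (hucard n).trans (le_of_eq (by ring))
  refine ⟨∑' n, u n, tsum_nonneg hu0, ?_⟩
  rw [hGeq, ← Complex.ofReal_tsum]

lemma boson_zero_mem {K : ℕ} (hK : 1 ≤ K) : (0 : ℤ) ∈ bosonMom K := by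
  simp only [bosonMom, Finset.mem_filter, Finset.mem_Ico]
  omega

lemma boson_dvd_eq_zero {K : ℕ} (hK : 1 ≤ K) {m : ℤ} (h : m ∈ bosonMom K)
    (hd : (K : ℤ) ∣ m) : m = 0 := by
  simp only [bosonMom, Finset.mem_filter, Finset.mem_Ico] at h
  obtain ⟨q, rfl⟩ := hd
  have hK1 : (1 : ℤ) ≤ K := by exact_mod_cast hK
  have h1 : q < 1 := by nlinarith [h.2.1, h.2.2]
  have h2 : -1 < q := by nlinarith [h.2.1, h.2.2]
  have : q = 0 := by omega
  rw [this, mul_zero]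

lemma sigmaSq_zero (a : ℝ) (ha : a ≠ 0) (K : ℕ) (hK : 1 ≤ K) :
    latticeSigmaSq a (fun σ => 2 * π * (((0 : ℤ) : ℝ)) / ((K : ℝ) * a)) = 0 := by
  rw [sigmaSq_eq a ha K hK (fun _ => 0)]
  norm_num

lemma Gsum (a : ℝ) (ha : 0 < a) {K : ℕ} (hK : 1 ≤ K) (M : ℝ) (hM : 0 < M) (c : ℝ)
    (w : Fin 4 → ℤ) :
    ∑ jx : Fin 4 → Fin K, Gfun a K M c (fun ρ => (jx ρ : ℤ) + w ρ)
      = (((K : ℝ) ^ 4 / M ^ 2 : ℝ) : ℂ) := by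
  classical
  unfold Gfun
  rw [Finset.sum_comm]
  have per_m : ∀ m ∈ Fintype.piFinset (fun _ : Fin 4 => bosonMom K),
      (∑ jx : Fin 4 → Fin K, ph K (∑ ρ, m ρ * ((jx ρ : ℤ) + w ρ)) *
        (((c * latticeSigmaSq a (fun σ => 2 * π * (m σ : ℝ) / ((K : ℝ) * a)) + M ^ 2)⁻¹ : ℝ) : ℂ))
      = (ph K (∑ ρ, m ρ * w ρ) *
        (((c * latticeSigmaSq a (fun σ => 2 * π * (m σ : ℝ) / ((K : ℝ) * a)) + M ^ 2)⁻¹ : ℝ) : ℂ))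
        * ∏ ρ, (if (K : ℤ) ∣ m ρ then (K : ℂ) else 0) := by
    intro m _
    have split : ∀ jx : Fin 4 → Fin K, ph K (∑ ρ, m ρ * ((jx ρ : ℤ) + w ρ))
        = ph K (∑ ρ, m ρ * w ρ) * ∏ ρ, ph K (m ρ * (jx ρ : ℤ)) := by
      intro jx
      have harg : (∑ ρ, m ρ * ((jx ρ : ℤ) + w ρ))
          = (∑ ρ, m ρ * w ρ) + (∑ ρ, m ρ * (jx ρ : ℤ)) := by
        rw [← Finset.sum_add_distrib]
        exact Finset.sum_congr rfl fun ρ _ => by ring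
      rw [harg, ph_add]
      congr 1
      exact ph_sum K Finset.univ _
    have step : ∀ jx : Fin 4 → Fin K, ph K (∑ ρ, m ρ * ((jx ρ : ℤ) + w ρ)) *
        (((c * latticeSigmaSq a (fun σ => 2 * π * (m σ : ℝ) / ((K : ℝ) * a)) + M ^ 2)⁻¹ : ℝ) : ℂ)
        = (ph K (∑ ρ, m ρ * w ρ) *
          (((c * latticeSigmaSq a (fun σ => 2 * π * (m σ : ℝ) / ((K : ℝ) * a)) + M ^ 2)⁻¹ : ℝ) : ℂ))
          * ∏ ρ, ph K (m ρ * (jx ρ : ℤ)) := by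
      intro jx
      rw [split jx]
      ring
    rw [Finset.sum_congr rfl fun jx _ => step jx, ← Finset.mul_sum]
    congr 1
    have : ∑ jx : Fin 4 → Fin K, ∏ ρ, ph K (m ρ * (jx ρ : ℤ))
        = ∏ ρ, ∑ x : Fin K, ph K (m ρ * (x : ℤ)) := by
      rw [Finset.prod_univ_sum (fun _ : Fin 4 => (Finset.univ : Finset (Fin K)))
        (fun ρ x => ph K (m ρ * (x : ℤ))), Fintype.piFinset_univ]
    rw [this]
    exact Finset.prod_congr rfl fun ρ _ => sum_fin_ph hK (m ρ)
  rw [Finset.sum_congr rfl per_m]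
  rw [Finset.sum_eq_single (fun _ : Fin 4 => (0 : ℤ))]
  · have h0 : (∑ ρ : Fin 4, (0 : ℤ) * w ρ) = 0 := by simp
    rw [h0, ph_zero, one_mul]
    rw [sigmaSq_zero a (ne_of_gt ha) K hK]
    have hprod : (∏ _ρ : Fin 4, (if (K : ℤ) ∣ (0:ℤ) then (K : ℂ) else 0)) = (K : ℂ) ^ 4 := by
      simp [dvd_zero]
    rw [hprod]
    push_cast
    ring
  · intro m hm hne
    have hex : ∃ ρ : Fin 4, m ρ ≠ 0 := by
      by_contra hc2
      push_neg at hc2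
      exact hne (funext hc2)
    obtain ⟨ρ0, hρ0⟩ := hex
    have hmem : m ρ0 ∈ bosonMom K := by
      rw [Fintype.mem_piFinset] at hm
      exact hm ρ0
    have : (if (K : ℤ) ∣ m ρ0 then (K : ℂ) else 0) = 0 := by
      rw [if_neg]
      intro hd
      exact hρ0 (boson_dvd_eq_zero hK hmem hd)
    rw [Finset.prod_eq_zero (Finset.mem_univ ρ0) this, mul_zero]
  · intro h0
    exact absurd (by rw [Fintype.mem_piFinset]; exact fun ρ => boson_zero_mem hK) h0

lemma ph_conj (K : ℕ) (n : ℤ) : starRingEnd ℂ (ph K n) = ph K (-n) := by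
  rw [ph_eq_ofReal_mul_I, ph_eq_ofReal_mul_I, ← Complex.exp_conj]
  congr 1
  rw [map_mul, Complex.conj_I, Complex.conj_ofReal]
  push_cast
  ring

lemma sum_mul_ite (m : Fin 4 → ℤ) (τ : Fin 4) :
    (∑ ρ, m ρ * (if ρ = τ then (1 : ℤ) else 0)) = m τ := by
  have h : ∀ ρ : Fin 4, m ρ * (if ρ = τ then (1 : ℤ) else 0) = (if ρ = τ then m ρ else 0) := by
    intro ρ
    split <;> ring
  rw [Finset.sum_congr rfl fun ρ _ => h ρ, Finset.sum_ite_eq' Finset.univ τ m]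
  simp

set_option maxHeartbeats 2000000 in
lemma decomp (a : ℝ) (ha : 0 < a) {K : ℕ} (hK : 1 ≤ K) (M : ℝ) (hM : 0 < M) (ξ : ℝ)
    (hξ0 : 0 ≤ ξ) (hξ1 : ξ < 1) (μ ν : Fin 4) (jx jy : Fin 4 → Fin K) :
    ∑ m ∈ Fintype.piFinset (fun _ : Fin 4 => bosonMom K),
      Complex.exp (Complex.I *
          ((∑ ρ : Fin 4, (2 * π * (m ρ : ℝ) / ((K : ℝ) * a)) * (a * (jx ρ : ℝ) - a * (jy ρ : ℝ)) : ℝ) : ℂ)) *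
        covEntry a M ξ (fun ρ => 2 * π * (m ρ : ℝ) / ((K : ℝ) * a)) μ ν
    = (if μ = ν then 1 else 0) * Gfun a K M 1 (fun ρ => (jx ρ : ℤ) + (-(jy ρ : ℤ)))
      + ((a ^ 2 * M ^ 2 : ℝ) : ℂ)⁻¹ *
        ( (Gfun a K M 1 (fun ρ => (jx ρ : ℤ) + (-(jy ρ : ℤ) + ((if ρ = ν then 1 else 0) - (if ρ = μ then 1 else 0))))
            - Gfun a K M 1 (fun ρ => (jx ρ : ℤ) + (-(jy ρ : ℤ) + (-(if ρ = μ then 1 else 0))))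
            - Gfun a K M 1 (fun ρ => (jx ρ : ℤ) + (-(jy ρ : ℤ) + (if ρ = ν then 1 else 0)))
            + Gfun a K M 1 (fun ρ => (jx ρ : ℤ) + (-(jy ρ : ℤ))))
          - ((1 - ξ : ℝ) : ℂ) *
            (Gfun a K M (1 - ξ) (fun ρ => (jx ρ : ℤ) + (-(jy ρ : ℤ) + ((if ρ = ν then 1 else 0) - (if ρ = μ then 1 else 0))))
              - Gfun a K M (1 - ξ) (fun ρ => (jx ρ : ℤ) + (-(jy ρ : ℤ) + (-(if ρ = μ then 1 else 0))))
              - Gfun a K M (1 - ξ) (fun ρ => (jx ρ : ℤ) + (-(jy ρ : ℤ) + (if ρ = ν then 1 else 0)))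
              + Gfun a K M (1 - ξ) (fun ρ => (jx ρ : ℤ) + (-(jy ρ : ℤ))))) := by
  classical
  have haC : (a : ℂ) ≠ 0 := Complex.ofReal_ne_zero.2 (ne_of_gt ha)
  have hMC : (M : ℂ) ≠ 0 := Complex.ofReal_ne_zero.2 (ne_of_gt hM)
  have per : ∀ m ∈ Fintype.piFinset (fun _ : Fin 4 => bosonMom K),
      Complex.exp (Complex.I *
          ((∑ ρ : Fin 4, (2 * π * (m ρ : ℝ) / ((K : ℝ) * a)) * (a * (jx ρ : ℝ) - a * (jy ρ : ℝ)) : ℝ) : ℂ)) *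
        covEntry a M ξ (fun ρ => 2 * π * (m ρ : ℝ) / ((K : ℝ) * a)) μ ν
      = (if μ = ν then 1 else 0) *
          (ph K (∑ ρ, m ρ * ((jx ρ : ℤ) + (-(jy ρ : ℤ)))) *
            (((1 * latticeSigmaSq a (fun σ => 2 * π * (m σ : ℝ) / ((K : ℝ) * a)) + M ^ 2)⁻¹ : ℝ) : ℂ))
        + ((a ^ 2 * M ^ 2 : ℝ) : ℂ)⁻¹ *
          ( (ph K (∑ ρ, m ρ * ((jx ρ : ℤ) + (-(jy ρ : ℤ) + ((if ρ = ν then 1 else 0) - (if ρ = μ then 1 else 0))))) *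
              (((1 * latticeSigmaSq a (fun σ => 2 * π * (m σ : ℝ) / ((K : ℝ) * a)) + M ^ 2)⁻¹ : ℝ) : ℂ)
            - ph K (∑ ρ, m ρ * ((jx ρ : ℤ) + (-(jy ρ : ℤ) + (-(if ρ = μ then 1 else 0))))) *
              (((1 * latticeSigmaSq a (fun σ => 2 * π * (m σ : ℝ) / ((K : ℝ) * a)) + M ^ 2)⁻¹ : ℝ) : ℂ)
            - ph K (∑ ρ, m ρ * ((jx ρ : ℤ) + (-(jy ρ : ℤ) + (if ρ = ν then 1 else 0)))) *
              (((1 * latticeSigmaSq a (fun σ => 2 * π * (m σ : ℝ) / ((K : ℝ) * a)) + M ^ 2)⁻¹ : ℝ) : ℂ)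
            + ph K (∑ ρ, m ρ * ((jx ρ : ℤ) + (-(jy ρ : ℤ)))) *
              (((1 * latticeSigmaSq a (fun σ => 2 * π * (m σ : ℝ) / ((K : ℝ) * a)) + M ^ 2)⁻¹ : ℝ) : ℂ))
          - ((1 - ξ : ℝ) : ℂ) *
            (ph K (∑ ρ, m ρ * ((jx ρ : ℤ) + (-(jy ρ : ℤ) + ((if ρ = ν then 1 else 0) - (if ρ = μ then 1 else 0))))) *
              ((((1 - ξ) * latticeSigmaSq a (fun σ => 2 * π * (m σ : ℝ) / ((K : ℝ) * a)) + M ^ 2)⁻¹ : ℝ) : ℂ)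
            - ph K (∑ ρ, m ρ * ((jx ρ : ℤ) + (-(jy ρ : ℤ) + (-(if ρ = μ then 1 else 0))))) *
              ((((1 - ξ) * latticeSigmaSq a (fun σ => 2 * π * (m σ : ℝ) / ((K : ℝ) * a)) + M ^ 2)⁻¹ : ℝ) : ℂ)
            - ph K (∑ ρ, m ρ * ((jx ρ : ℤ) + (-(jy ρ : ℤ) + (if ρ = ν then 1 else 0)))) *
              ((((1 - ξ) * latticeSigmaSq a (fun σ => 2 * π * (m σ : ℝ) / ((K : ℝ) * a)) + M ^ 2)⁻¹ : ℝ) : ℂ)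
            + ph K (∑ ρ, m ρ * ((jx ρ : ℤ) + (-(jy ρ : ℤ)))) *
              ((((1 - ξ) * latticeSigmaSq a (fun σ => 2 * π * (m σ : ℝ) / ((K : ℝ) * a)) + M ^ 2)⁻¹ : ℝ) : ℂ))) := by
    intro m _
    have hA0 : 0 ≤ latticeSigmaSq a (fun σ => 2 * π * (m σ : ℝ) / ((K : ℝ) * a)) :=
      Finset.sum_nonneg fun ρ _ => Complex.normSq_nonneg _
    have hreal : (∑ ρ : Fin 4, (2 * π * (m ρ : ℝ) / ((K : ℝ) * a)) * (a * (jx ρ : ℝ) - a * (jy ρ : ℝ)))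
        = 2 * π * ((∑ ρ, m ρ * ((jx ρ : ℤ) + (-(jy ρ : ℤ))) : ℤ) : ℝ) / K := by
      have hKne : (K : ℝ) ≠ 0 := Nat.cast_ne_zero.2 (by omega)
      push_cast
      rw [Finset.mul_sum, Finset.sum_div]
      refine Finset.sum_congr rfl fun ρ _ => ?_
      field_simp
      ring
    have hph0 : Complex.exp (Complex.I *
          ((∑ ρ : Fin 4, (2 * π * (m ρ : ℝ) / ((K : ℝ) * a)) * (a * (jx ρ : ℝ) - a * (jy ρ : ℝ)) : ℝ) : ℂ))
        = ph K (∑ ρ, m ρ * ((jx ρ : ℤ) + (-(jy ρ : ℤ)))) := by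
      rw [hreal, ph]
      congr 1
      push_cast
      ring
    have hσν : latticeSigma a (fun σ => 2 * π * (m σ : ℝ) / ((K : ℝ) * a)) ν
        = (ph K (m ν) - 1) / (a : ℂ) := sigma_val a (ne_of_gt ha) K hK m ν
    have hσμ : starRingEnd ℂ (latticeSigma a (fun σ => 2 * π * (m σ : ℝ) / ((K : ℝ) * a)) μ)
        = (ph K (-(m μ)) - 1) / (a : ℂ) := by
      rw [sigma_val a (ne_of_gt ha) K hK m μ, map_div₀, map_sub, ph_conj, map_one, Complex.conj_ofReal]
    have hd1 : (∑ ρ, m ρ * ((jx ρ : ℤ) + (-(jy ρ : ℤ) + ((if ρ = ν then 1 else 0) - (if ρ = μ then 1 else 0)))))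
        = (∑ ρ, m ρ * ((jx ρ : ℤ) + (-(jy ρ : ℤ)))) + (m ν + -(m μ)) := by
      have h : ∀ ρ : Fin 4, m ρ * ((jx ρ : ℤ) + (-(jy ρ : ℤ) + ((if ρ = ν then 1 else 0) - (if ρ = μ then 1 else 0))))
          = m ρ * ((jx ρ : ℤ) + (-(jy ρ : ℤ))) + (m ρ * (if ρ = ν then 1 else 0) - m ρ * (if ρ = μ then 1 else 0)) := by
        intro ρ
        ring
      rw [Finset.sum_congr rfl fun ρ _ => h ρ, Finset.sum_add_distrib, Finset.sum_sub_distrib,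
        sum_mul_ite m ν, sum_mul_ite m μ]
      ring
    have hd2 : (∑ ρ, m ρ * ((jx ρ : ℤ) + (-(jy ρ : ℤ) + (-(if ρ = μ then 1 else 0)))))
        = (∑ ρ, m ρ * ((jx ρ : ℤ) + (-(jy ρ : ℤ)))) + -(m μ) := by
      have h : ∀ ρ : Fin 4, m ρ * ((jx ρ : ℤ) + (-(jy ρ : ℤ) + (-(if ρ = μ then 1 else 0))))
          = m ρ * ((jx ρ : ℤ) + (-(jy ρ : ℤ))) - m ρ * (if ρ = μ then 1 else 0) := by
        intro ρ
        ring
      rw [Finset.sum_congr rfl fun ρ _ => h ρ, Finset.sum_sub_distrib, sum_mul_ite m μ]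
      ring
    have hd3 : (∑ ρ, m ρ * ((jx ρ : ℤ) + (-(jy ρ : ℤ) + (if ρ = ν then 1 else 0))))
        = (∑ ρ, m ρ * ((jx ρ : ℤ) + (-(jy ρ : ℤ)))) + m ν := by
      have h : ∀ ρ : Fin 4, m ρ * ((jx ρ : ℤ) + (-(jy ρ : ℤ) + (if ρ = ν then 1 else 0)))
          = m ρ * ((jx ρ : ℤ) + (-(jy ρ : ℤ))) + m ρ * (if ρ = ν then 1 else 0) := by
        intro ρ
        ring
      rw [Finset.sum_congr rfl fun ρ _ => h ρ, Finset.sum_add_distrib, sum_mul_ite m ν]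
    rw [hph0, covEntry, hσν, hσμ, hd1, hd2, hd3, ph_add, ph_add, ph_add, ph_add]
    set A : ℝ := latticeSigmaSq a (fun σ => 2 * π * (m σ : ℝ) / ((K : ℝ) * a)) with hA
    have hAM : (0:ℝ) < A + M ^ 2 := by nlinarith
    have hBM : (0:ℝ) < (1 - ξ) * A + M ^ 2 := by nlinarith
    have hne1 : ((A : ℂ) + (M : ℂ) ^ 2) ≠ 0 := by
      have h := Complex.ofReal_ne_zero.2 (ne_of_gt hAM)
      push_cast at h
      exact h
    have hnec : ((1 - (ξ:ℂ)) * (A : ℂ) + (M : ℂ) ^ 2) ≠ 0 := by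
      have h := Complex.ofReal_ne_zero.2 (ne_of_gt hBM)
      push_cast at h
      exact h
    set P : ℂ := ph K (∑ ρ, m ρ * ((jx ρ : ℤ) + (-(jy ρ : ℤ))))
    set X : ℂ := ph K (m ν)
    set Y : ℂ := ph K (-(m μ))
    have scalarC : (ξ:ℂ) * (((A:ℂ) + (M:ℂ)^2)⁻¹ * ((1-(ξ:ℂ)) * (A:ℂ) + (M:ℂ)^2)⁻¹)
        = ((M:ℂ)^2)⁻¹ * (((A:ℂ)+(M:ℂ)^2)⁻¹ - (1-(ξ:ℂ))*((1-(ξ:ℂ))*(A:ℂ)+(M:ℂ)^2)⁻¹) := by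
      have hu := mul_inv_cancel₀ hne1
      have hv := mul_inv_cancel₀ hnec
      have hm := mul_inv_cancel₀ (pow_ne_zero 2 hMC)
      linear_combination (((M:ℂ)^2)⁻¹ * ((A:ℂ)+(M:ℂ)^2)⁻¹) * hv - ((1-(ξ:ℂ)) * ((M:ℂ)^2)⁻¹ * ((1-(ξ:ℂ))*(A:ℂ)+(M:ℂ)^2)⁻¹) * hu - ((ξ:ℂ) * ((A:ℂ)+(M:ℂ)^2)⁻¹ * ((1-(ξ:ℂ))*(A:ℂ)+(M:ℂ)^2)⁻¹) * hm
    by_cases hμν : μ = ν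
    · simp only [if_pos hμν]
      push_cast
      simp only [one_mul]
      linear_combination (P*X*Y - P*X - P*Y + P) * ((a:ℂ)^2)⁻¹ * scalarC
    · simp only [if_neg hμν]
      push_cast
      simp only [one_mul]
      linear_combination (P*X*Y - P*X - P*Y + P) * ((a:ℂ)^2)⁻¹ * scalarC
  rw [Finset.sum_congr rfl per]
  simp only [Gfun, Finset.sum_add_distrib, Finset.sum_sub_distrib, ← Finset.mul_sum]

set_option maxHeartbeats 2000000 in
/-- ℓ¹ bound on the gauge covariance: `a⁴ ∑_{x ∈ Λ} |g^A_{μν}(x,y)| ≤ C_ξ M⁻²`, with `C_ξ`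
depending only on the gauge-fixing parameter `ξ`, uniformly in `y ∈ Λ = aℤ⁴ ∩ [0,L)⁴`,
in `μ, ν` and in `L = Ka`, for `M a ≥ 1`. -/
theorem gaugeCov_l1_bound (ξ : ℝ) (hξ0 : 0 ≤ ξ) (hξ1 : ξ < 1) :
    ∃ C : ℝ, 0 < C ∧
      ∀ (a : ℝ), 0 < a → ∀ (K : ℕ), 1 ≤ K → ∀ (M : ℝ), 0 < M → 1 ≤ M * a →
      ∀ (my : Fin 4 → Fin K) (μ ν : Fin 4),
        a ^ 4 * ∑ mx : Fin 4 → Fin K,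
            ‖(gaugeCov a K M ξ μ ν (fun ρ => a * (mx ρ : ℝ)) (fun ρ => a * (my ρ : ℝ)))‖
          ≤ C / M ^ 2 := by
  classical
  refine ⟨9, by norm_num, ?_⟩
  intro a ha K hK M hM hMa my μ ν
  have hc : (0:ℝ) < 1 - ξ := by linarith
  have hKpos : (0:ℝ) < (K:ℝ) := by
    have : (1:ℝ) ≤ (K:ℝ) := by exact_mod_cast hK
    linarith
  choose t1 ht1 he1 using fun j => Gpos a ha hK M hM 1 one_pos j
  choose tc htc hec using fun j => Gpos a ha hK M hM (1-ξ) hc j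
  set B : ℝ := (K:ℝ)^4 / M^2 with hB
  have hB0 : 0 ≤ B := by positivity
  have hsum1 : ∀ w : Fin 4 → ℤ,
      ∑ mx : Fin 4 → Fin K, t1 (fun ρ => (mx ρ : ℤ) + w ρ) = B := by
    intro w
    have h := Gsum a ha hK M hM 1 w
    rw [Finset.sum_congr rfl (fun mx _ => he1 (fun ρ => (mx ρ : ℤ) + w ρ))] at h
    rw [← Complex.ofReal_sum] at h
    rw [hB]
    exact_mod_cast h
  have hsumc : ∀ w : Fin 4 → ℤ,
      ∑ mx : Fin 4 → Fin K, tc (fun ρ => (mx ρ : ℤ) + w ρ) = B := by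
    intro w
    have h := Gsum a ha hK M hM (1-ξ) w
    rw [Finset.sum_congr rfl (fun mx _ => hec (fun ρ => (mx ρ : ℤ) + w ρ))] at h
    rw [← Complex.ofReal_sum] at h
    rw [hB]
    exact_mod_cast h
  have hinv2nonneg : (0:ℝ) ≤ (a^2*M^2)⁻¹ := by positivity
  have hinv2le : (a^2*M^2)⁻¹ ≤ 1 := by
    have h1 : (1:ℝ) ≤ a^2*M^2 := by nlinarith
    have h2 : (0:ℝ) < a^2*M^2 := by positivity
    rw [inv_le_one_iff₀]
    right
    exact h1
  -- per-x bound
  have hper : ∀ mx : Fin 4 → Fin K,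
      ‖gaugeCov a K M ξ μ ν (fun ρ => a * (mx ρ : ℝ)) (fun ρ => a * (my ρ : ℝ))‖
        ≤ (((K:ℝ)*a)^4)⁻¹ * ((if μ = ν then (1:ℝ) else 0) * t1 (fun ρ => (mx ρ : ℤ) + (-(my ρ : ℤ))) + (a^2*M^2)⁻¹ * (((t1 (fun ρ => (mx ρ : ℤ) + (-(my ρ : ℤ) + ((if ρ = ν then 1 else 0) - (if ρ = μ then 1 else 0)))) + t1 (fun ρ => (mx ρ : ℤ) + (-(my ρ : ℤ) + (-(if ρ = μ then 1 else 0))))) + t1 (fun ρ => (mx ρ : ℤ) + (-(my ρ : ℤ) + (if ρ = ν then 1 else 0))) + t1 (fun ρ => (mx ρ : ℤ) + (-(my ρ : ℤ)))) + (1-ξ)*((tc (fun ρ => (mx ρ : ℤ) + (-(my ρ : ℤ) + ((if ρ = ν then 1 else 0) - (if ρ = μ then 1 else 0)))) + tc (fun ρ => (mx ρ : ℤ) + (-(my ρ : ℤ) + (-(if ρ = μ then 1 else 0))))) + tc (fun ρ => (mx ρ : ℤ) + (-(my ρ : ℤ) + (if ρ = ν then 1 else 0))) + tc (fun ρ =>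 (mx ρ : ℤ) + (-(my ρ : ℤ)))))) := by
    intro mx
    simp only [gaugeCov]
    rw [decomp a ha hK M hM ξ hξ0 hξ1 μ ν mx my, norm_mul]
    have hco : ‖((((((K:ℝ)*a)^4)⁻¹ : ℝ)) : ℂ)‖ = (((K:ℝ)*a)^4)⁻¹ := by
      rw [Complex.norm_real, Real.norm_eq_abs, abs_of_nonneg (by positivity)]
    rw [hco]
    refine mul_le_mul_of_nonneg_left ?_ (by positivity)
    simp only [he1, hec]
    refine le_trans (norm_add_le _ _) ?_
    have h1 : ‖(if μ = ν then (1:ℂ) else 0) * ((t1 (fun ρ => (mx ρ : ℤ) + (-(my ρ : ℤ))) : ℝ) : ℂ)‖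
        = (if μ = ν then (1:ℝ) else 0) * t1 (fun ρ => (mx ρ : ℤ) + (-(my ρ : ℤ))) := by
      split <;> simp [Complex.norm_real, abs_of_nonneg (ht1 _)]
    have hQ : ((((t1 (fun ρ => (mx ρ : ℤ) + (-(my ρ : ℤ) + ((if ρ = ν then 1 else 0) - (if ρ = μ then 1 else 0)))) : ℝ) : ℂ) - ((t1 (fun ρ => (mx ρ : ℤ) + (-(my ρ : ℤ) + (-(if ρ = μ then 1 else 0)))) : ℝ) : ℂ)) - ((t1 (fun ρ => (mx ρ : ℤ) + (-(my ρ : ℤ) + (if ρ = ν then 1 else 0))) : ℝ) : ℂ) + ((t1 (fun ρ => (mx ρ : ℤ) + (-(my ρ : ℤ))) : ℝ) : ℂ) - ((1 - ξ : ℝ) : ℂ) * ((((tc (fun ρ => (mx ρ : ℤ) + (-(my ρ : ℤ) + ((if ρ = ν then 1 else 0) - (if ρ = μ then 1 else 0)))) : ℝ) : ℂ) - ((tc (fun ρ => (mx ρ : ℤ) + (-(my ρ : ℤ) + (-(if ρ = μ then 1 else 0)))) : ℝ) : ℂ)) - ((tc (fun ρ => (mx ρ : ℤ) + (-(my ρ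 : ℤ) + (if ρ = ν then 1 else 0))) : ℝ) : ℂ) + ((tc (fun ρ => (mx ρ : ℤ) + (-(my ρ : ℤ))) : ℝ) : ℂ))) = (((((t1 (fun ρ => (mx ρ : ℤ) + (-(my ρ : ℤ) + ((if ρ = ν then 1 else 0) - (if ρ = μ then 1 else 0)))) - t1 (fun ρ => (mx ρ : ℤ) + (-(my ρ : ℤ) + (-(if ρ = μ then 1 else 0))))) - t1 (fun ρ => (mx ρ : ℤ) + (-(my ρ : ℤ) + (if ρ = ν then 1 else 0))) + t1 (fun ρ => (mx ρ : ℤ) + (-(my ρ : ℤ)))) - (1-ξ)*((tc (fun ρ => (mx ρ : ℤ) + (-(my ρ : ℤ) + ((if ρ = ν then 1 else 0) - (if ρ = μ then 1 else 0)))) - tc (fun ρ => (mx ρ : ℤ) + (-(my ρ : ℤ) + (-(if ρ = μ then 1 else 0))))) - tc (fun ρ => (mx ρ : ℤ) + (-(my ρ : ℤ) + (if ρ = ν then 1 else 0))) + tc (fun ρ => (mx ρ : ℤ) + (-(my ρ : ℤ)))) : ℝ) : ℝ) : ℂ) := by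
      push_cast
      ring
    have hR2le : |(((t1 (fun ρ => (mx ρ : ℤ) + (-(my ρ : ℤ) + ((if ρ = ν then 1 else 0) - (if ρ = μ then 1 else 0)))) - t1 (fun ρ => (mx ρ : ℤ) + (-(my ρ : ℤ) + (-(if ρ = μ then 1 else 0))))) - t1 (fun ρ => (mx ρ : ℤ) + (-(my ρ : ℤ) + (if ρ = ν then 1 else 0))) + t1 (fun ρ => (mx ρ : ℤ) + (-(my ρ : ℤ)))) - (1-ξ)*((tc (fun ρ => (mx ρ : ℤ) + (-(my ρ : ℤ) + ((if ρ = ν then 1 else 0) - (if ρ = μ then 1 else 0)))) - tc (fun ρ => (mx ρ : ℤ) + (-(my ρ : ℤ) + (-(if ρ = μ then 1 else 0))))) - tc (fun ρ => (mx ρ : ℤ) + (-(my ρ : ℤ) + (if ρ = ν then 1 else 0))) + tc (fun ρ => (mx ρ : ℤ) + (-(my ρ : ℤ)))) : ℝ)| ≤ ((t1 (fun ρ => (mx ρ : ℤ) + (-(my ρ : ℤ) + ((if ρ = ν then 1 else 0) - (if ρ = μ then 1 else 0)))) + t1 (fun ρ => (mx ρ : ℤ) + (-(my ρ : ℤ)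 + (-(if ρ = μ then 1 else 0))))) + t1 (fun ρ => (mx ρ : ℤ) + (-(my ρ : ℤ) + (if ρ = ν then 1 else 0))) + t1 (fun ρ => (mx ρ : ℤ) + (-(my ρ : ℤ)))) + (1-ξ)*((tc (fun ρ => (mx ρ : ℤ) + (-(my ρ : ℤ) + ((if ρ = ν then 1 else 0) - (if ρ = μ then 1 else 0)))) + tc (fun ρ => (mx ρ : ℤ) + (-(my ρ : ℤ) + (-(if ρ = μ then 1 else 0))))) + tc (fun ρ => (mx ρ : ℤ) + (-(my ρ : ℤ) + (if ρ = ν then 1 else 0))) + tc (fun ρ => (mx ρ : ℤ) + (-(my ρ : ℤ)))) := by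
      have k1 := ht1 (fun ρ => (mx ρ : ℤ) + (-(my ρ : ℤ)))
      have k2 := ht1 (fun ρ => (mx ρ : ℤ) + (-(my ρ : ℤ) + ((if ρ = ν then 1 else 0) - (if ρ = μ then 1 else 0))))
      have k3 := ht1 (fun ρ => (mx ρ : ℤ) + (-(my ρ : ℤ) + (-(if ρ = μ then 1 else 0))))
      have k4 := ht1 (fun ρ => (mx ρ : ℤ) + (-(my ρ : ℤ) + (if ρ = ν then 1 else 0)))
      have l1 := htc (fun ρ => (mx ρ : ℤ) + (-(my ρ : ℤ)))
      have l2 := htc (fun ρ => (mx ρ : ℤ) + (-(my ρ : ℤ) + ((if ρ = ν then 1 else 0) - (if ρ = μ then 1 else 0))))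
      have l3 := htc (fun ρ => (mx ρ : ℤ) + (-(my ρ : ℤ) + (-(if ρ = μ then 1 else 0))))
      have l4 := htc (fun ρ => (mx ρ : ℤ) + (-(my ρ : ℤ) + (if ρ = ν then 1 else 0)))
      rw [abs_le]
      constructor <;> nlinarith
    have h2 : ‖((a ^ 2 * M ^ 2 : ℝ) : ℂ)⁻¹ * ((((t1 (fun ρ => (mx ρ : ℤ) + (-(my ρ : ℤ) + ((if ρ = ν then 1 else 0) - (if ρ = μ then 1 else 0)))) : ℝ) : ℂ) - ((t1 (fun ρ => (mx ρ : ℤ) + (-(my ρ : ℤ) + (-(if ρ = μ then 1 else 0)))) : ℝ) : ℂ)) - ((t1 (fun ρ => (mx ρ : ℤ) + (-(my ρ : ℤ) + (if ρ = ν then 1 else 0))) : ℝ) : ℂ) + ((t1 (fun ρ => (mx ρ : ℤ) + (-(my ρ : ℤ))) : ℝ) : ℂ) - ((1 - ξ : ℝ) : ℂ) * ((((tc (fun ρ => (mx ρ : ℤ) + (-(my ρ : ℤ) + ((if ρ = ν then 1 else 0) - (if ρ = μ then 1 else 0)))) : ℝ) : ℂ) - ((tc (fun ρ => (mx ρ :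 ℤ) + (-(my ρ : ℤ) + (-(if ρ = μ then 1 else 0)))) : ℝ) : ℂ)) - ((tc (fun ρ => (mx ρ : ℤ) + (-(my ρ : ℤ) + (if ρ = ν then 1 else 0))) : ℝ) : ℂ) + ((tc (fun ρ => (mx ρ : ℤ) + (-(my ρ : ℤ))) : ℝ) : ℂ)))‖
        ≤ (a^2*M^2)⁻¹ * (((t1 (fun ρ => (mx ρ : ℤ) + (-(my ρ : ℤ) + ((if ρ = ν then 1 else 0) - (if ρ = μ then 1 else 0)))) + t1 (fun ρ => (mx ρ : ℤ) + (-(my ρ : ℤ) + (-(if ρ = μ then 1 else 0))))) + t1 (fun ρ => (mx ρ : ℤ) + (-(my ρ : ℤ) + (if ρ = ν then 1 else 0))) + t1 (fun ρ => (mx ρ : ℤ) + (-(my ρ : ℤ)))) + (1-ξ)*((tc (fun ρ => (mx ρ : ℤ) + (-(my ρ : ℤ) + ((if ρ = ν then 1 else 0) - (if ρ = μ then 1 else 0)))) + tc (fun ρ => (mx ρ : ℤ) + (-(my ρ : ℤ) + (-(if ρ = μ then 1 else 0))))) + tc (fun ρ => (mx ρ : ℤ) + (-(my ρ : ℤ)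 + (if ρ = ν then 1 else 0))) + tc (fun ρ => (mx ρ : ℤ) + (-(my ρ : ℤ))))) := by
      rw [norm_mul, hQ, Complex.norm_real, Real.norm_eq_abs, norm_inv, Complex.norm_real, Real.norm_eq_abs,
        abs_of_nonneg (by positivity : (0:ℝ) ≤ a ^ 2 * M ^ 2)]
      exact mul_le_mul_of_nonneg_left hR2le hinv2nonneg
    calc ‖(if μ = ν then (1:ℂ) else 0) * ((t1 (fun ρ => (mx ρ : ℤ) + (-(my ρ : ℤ))) : ℝ) : ℂ)‖
          + ‖((a ^ 2 * M ^ 2 : ℝ) : ℂ)⁻¹ * ((((t1 (fun ρ => (mx ρ : ℤ) + (-(my ρ : ℤ) + ((if ρ = ν then 1 else 0) - (if ρ = μ then 1 else 0)))) : ℝ) : ℂ) - ((t1 (fun ρ => (mx ρ : ℤ) + (-(my ρ : ℤ) + (-(if ρ = μ then 1 else 0)))) : ℝ) : ℂ)) - ((t1 (fun ρ => (mx ρ : ℤ) + (-(my ρ : ℤ) + (if ρ = ν then 1 else 0))) : ℝ) : ℂ) + ((t1 (fun ρ => (mx ρ : ℤ) + (-(my ρ : ℤ))) : ℝ) : ℂ)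 - ((1 - ξ : ℝ) : ℂ) * ((((tc (fun ρ => (mx ρ : ℤ) + (-(my ρ : ℤ) + ((if ρ = ν then 1 else 0) - (if ρ = μ then 1 else 0)))) : ℝ) : ℂ) - ((tc (fun ρ => (mx ρ : ℤ) + (-(my ρ : ℤ) + (-(if ρ = μ then 1 else 0)))) : ℝ) : ℂ)) - ((tc (fun ρ => (mx ρ : ℤ) + (-(my ρ : ℤ) + (if ρ = ν then 1 else 0))) : ℝ) : ℂ) + ((tc (fun ρ => (mx ρ : ℤ) + (-(my ρ : ℤ))) : ℝ) : ℂ)))‖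
        ≤ (if μ = ν then (1:ℝ) else 0) * t1 (fun ρ => (mx ρ : ℤ) + (-(my ρ : ℤ)))
          + (a^2*M^2)⁻¹ * (((t1 (fun ρ => (mx ρ : ℤ) + (-(my ρ : ℤ) + ((if ρ = ν then 1 else 0) - (if ρ = μ then 1 else 0)))) + t1 (fun ρ => (mx ρ : ℤ) + (-(my ρ : ℤ) + (-(if ρ = μ then 1 else 0))))) + t1 (fun ρ => (mx ρ : ℤ) + (-(my ρ : ℤ) + (if ρ = ν then 1 else 0))) + t1 (fun ρ => (mx ρ : ℤ) + (-(my ρ : ℤ)))) + (1-ξ)*((tc (fun ρ => (mx ρ : ℤ) + (-(my ρ : ℤ) + ((if ρ = ν then 1 else 0) - (if ρ = μ then 1 else 0)))) + tc (fun ρ => (mx ρ : ℤ) + (-(my ρ : ℤ) + (-(if ρ = μ then 1 else 0))))) + tc (fun ρ => (mx ρ : ℤ) + (-(my ρ : ℤ) + (if ρ = ν then 1 else 0))) + tc (fun ρ => (mx ρ : ℤ) + (-(my ρ : ℤ))))) := by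
          rw [h1]
          exact add_le_add le_rfl h2
      _ = _ := rfl
  -- sum the bound
  have hstep : (∑ mx : Fin 4 → Fin K,
      ‖gaugeCov a K M ξ μ ν (fun ρ => a * (mx ρ : ℝ)) (fun ρ => a * (my ρ : ℝ))‖)
      ≤ (((K:ℝ)*a)^4)⁻¹ * ((if μ = ν then (1:ℝ) else 0) * B + (a^2*M^2)⁻¹ * (((B + B) + B + B) + (1-ξ)*((B + B) + B + B))) := by
    refine le_trans (Finset.sum_le_sum fun mx _ => hper mx) (le_of_eq ?_)
    rw [← Finset.mul_sum]
    congr 1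
    have e0 : ∑ mx : Fin 4 → Fin K, t1 (fun ρ => (mx ρ : ℤ) + (-(my ρ : ℤ))) = B := hsum1 _
    have e1 : ∑ mx : Fin 4 → Fin K, t1 (fun ρ => (mx ρ : ℤ) + (-(my ρ : ℤ) + ((if ρ = ν then 1 else 0) - (if ρ = μ then 1 else 0)))) = B := hsum1 _
    have e2 : ∑ mx : Fin 4 → Fin K, t1 (fun ρ => (mx ρ : ℤ) + (-(my ρ : ℤ) + (-(if ρ = μ then 1 else 0)))) = B := hsum1 _
    have e3 : ∑ mx : Fin 4 → Fin K, t1 (fun ρ => (mx ρ : ℤ) + (-(my ρ : ℤ) + (if ρ = ν then 1 else 0))) = B := hsum1 _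
    have f0 : ∑ mx : Fin 4 → Fin K, tc (fun ρ => (mx ρ : ℤ) + (-(my ρ : ℤ))) = B := hsumc _
    have f1 : ∑ mx : Fin 4 → Fin K, tc (fun ρ => (mx ρ : ℤ) + (-(my ρ : ℤ) + ((if ρ = ν then 1 else 0) - (if ρ = μ then 1 else 0)))) = B := hsumc _
    have f2 : ∑ mx : Fin 4 → Fin K, tc (fun ρ => (mx ρ : ℤ) + (-(my ρ : ℤ) + (-(if ρ = μ then 1 else 0)))) = B := hsumc _
    have f3 : ∑ mx : Fin 4 → Fin K, tc (fun ρ => (mx ρ : ℤ) + (-(my ρ : ℤ) + (if ρ = ν then 1 else 0))) = B := hsumc _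
    simp only [Finset.sum_add_distrib, ← Finset.mul_sum]
    rw [e0, e1, e2, e3, f0, f1, f2, f3]
  have hT : (if μ = ν then (1:ℝ) else 0) * B + (a^2*M^2)⁻¹ * (((B + B) + B + B) + (1-ξ)*((B + B) + B + B)) ≤ 9 * B := by
    have h1 : (if μ = ν then (1:ℝ) else 0) * B ≤ B := by
      split
      · simp
      · simp [hB0]
    have h2 : ((B + B) + B + B) + (1-ξ)*((B + B) + B + B) ≤ 8*B := by nlinarith
    have h2' : (0:ℝ) ≤ ((B + B) + B + B) + (1-ξ)*((B + B) + B + B) := by nlinarith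
    have h3 : (a^2*M^2)⁻¹ * (((B + B) + B + B) + (1-ξ)*((B + B) + B + B)) ≤ 1 * (8*B) :=
      mul_le_mul hinv2le h2 h2' zero_le_one
    linarith
  have hfin : a^4 * ((((K:ℝ)*a)^4)⁻¹ * (9*B)) = 9 / M^2 := by
    rw [hB]
    have hane : a ≠ 0 := ne_of_gt ha
    have hKne : (K:ℝ) ≠ 0 := ne_of_gt hKpos
    have hMne : M ≠ 0 := ne_of_gt hM
    field_simp
  calc a ^ 4 * ∑ mx : Fin 4 → Fin K,
        ‖gaugeCov a K M ξ μ ν (fun ρ => a * (mx ρ : ℝ)) (fun ρ => a * (my ρ : ℝ))‖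
      ≤ a ^ 4 * ((((K:ℝ)*a)^4)⁻¹ * ((if μ = ν then (1:ℝ) else 0) * B + (a^2*M^2)⁻¹ * (((B + B) + B + B) + (1-ξ)*((B + B) + B + B)))) := by
        refine mul_le_mul_of_nonneg_left hstep (by positivity)
    _ ≤ a ^ 4 * ((((K:ℝ)*a)^4)⁻¹ * (9*B)) := by
        refine mul_le_mul_of_nonneg_left (mul_le_mul_of_nonneg_left hT (by positivity)) (by positivity)
    _ = 9 / M ^ 2 := hfin
end

section
/- Let a > 0, M > 0, and 0 ≤ ξ ≤ 1. For any k ∈ ℝ^4 set σ_μ(k) = (e^{i k_μ a} - 1)/a and |σ(k)|^2 = Σ_{μ=0}^3 |σ_μ(k)|^2, and let G(k) be the 4×4 complex matrix with entries G(k)_{μν} = (|σ(k)|^2 + M^2)^{-1} (δ_{μν} + ξ · conj(σ_μ(k)) σ_ν(k) / ((1-ξ)|σ(k)|^2 + M^2)). Then G(k) is Hermitian and positive definite. -/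
open scoped Real ComplexOrder

/-- The momentum-space covariance matrix of the massive lattice `U(1)` gauge field,
`G(k)_{μν} = (|σ(k)|² + M²)⁻¹ (δ_{μν} + ξ conj(σ_μ(k)) σ_ν(k) / ((1-ξ)|σ(k)|² + M²))`. -/
noncomputable def covMatrix (a M ξ : ℝ) (k : Fin 4 → ℝ) : Matrix (Fin 4) (Fin 4) ℂ :=
  Matrix.of fun μ ν =>
    (((latticeSigmaSq a k + M ^ 2)⁻¹ : ℝ) : ℂ) *
      ((if μ = ν then 1 else 0) +
        (ξ : ℂ) * (starRingEnd ℂ (latticeSigma a k μ)) * latticeSigma a k ν /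
          ((((1 - ξ) * latticeSigmaSq a k + M ^ 2 : ℝ)) : ℂ))

/-- The momentum-space covariance of the non-compact massive lattice `U(1)` gauge field is a
Hermitian positive definite matrix, for any `a > 0`, `M > 0`, gauge-fixing `0 ≤ ξ ≤ 1` and
any momentum `k ∈ ℝ⁴`. -/
theorem covMatrix_isHermitian_posDef (a M ξ : ℝ) (ha : 0 < a) (hM : 0 < M)
    (hξ0 : 0 ≤ ξ) (hξ1 : ξ ≤ 1) (k : Fin 4 → ℝ) :
    (covMatrix a M ξ k).IsHermitian ∧ (covMatrix a M ξ k).PosDef := by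
  set σ : Fin 4 → ℂ := latticeSigma a k with hσ
  set S : ℝ := latticeSigmaSq a k with hS
  have hSnn : 0 ≤ S := Finset.sum_nonneg fun μ _ => Complex.normSq_nonneg _
  have hc : 0 < S + M ^ 2 := by positivity
  have hD : 0 < (1 - ξ) * S + M ^ 2 := by
    have h1 : 0 ≤ (1 - ξ) * S := mul_nonneg (by linarith) hSnn
    nlinarith [sq_nonneg M]
  have hherm : (covMatrix a M ξ k).IsHermitian := by
    ext μ ν
    simp only [covMatrix, Matrix.conjTranspose_apply, Matrix.of_apply, map_mul, map_add,
      map_div₀, Complex.conj_ofReal, Complex.conj_conj, MonoidWithZeroHom.map_ite_one_zero,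
      RCLike.star_def]
    by_cases h : μ = ν
    · subst h; ring
    · rw [if_neg h, if_neg (fun h' => h h'.symm)]; ring
  refine ⟨hherm, Matrix.posDef_iff_dotProduct_mulVec.mpr ⟨hherm, fun x hx => ?_⟩⟩
  -- Key computation
  set c : ℝ := (S + M ^ 2)⁻¹ with hcdef
  set D : ℝ := (1 - ξ) * S + M ^ 2 with hDdef
  set T : ℂ := ∑ ν, σ ν * x ν with hT
  have inner : ∀ μ, (∑ ν, ((c : ℂ) *
      ((if μ = ν then 1 else 0) + (ξ : ℂ) * (starRingEnd ℂ (σ μ)) * σ ν / (D : ℂ))) * x ν)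
      = (c : ℂ) * x μ + (c : ℂ) * (ξ : ℂ) * (starRingEnd ℂ (σ μ)) / (D : ℂ) * T := by
    intro μ
    have : ∀ ν, ((c : ℂ) *
        ((if μ = ν then 1 else 0) + (ξ : ℂ) * (starRingEnd ℂ (σ μ)) * σ ν / (D : ℂ))) * x ν
        = (if ν = μ then (c : ℂ) * x ν else 0)
          + (c : ℂ) * (ξ : ℂ) * (starRingEnd ℂ (σ μ)) / (D : ℂ) * (σ ν * x ν) := by
      intro ν
      by_cases h : μ = ν
      · subst h; rw [if_pos rfl, if_pos rfl]; ring
      · rw [if_neg h, if_neg (fun h' => h h'.symm)]; ring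
    rw [Finset.sum_congr rfl fun ν _ => this ν, Finset.sum_add_distrib,
      Finset.sum_ite_eq' Finset.univ μ (fun ν => (c : ℂ) * x ν) , if_pos (Finset.mem_univ μ),
      ← Finset.mul_sum, ← hT]
  have conjsum : (∑ μ, (starRingEnd ℂ) (x μ) * (starRingEnd ℂ) (σ μ)) = starRingEnd ℂ T := by
    rw [hT, map_sum]
    exact Finset.sum_congr rfl fun μ _ => by rw [map_mul]; ring
  have key : dotProduct (star x) ((covMatrix a M ξ k).mulVec x)
      = ((c * ((∑ μ, Complex.normSq (x μ)) + ξ * Complex.normSq T / D) : ℝ) : ℂ) := by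
    simp only [dotProduct, Matrix.mulVec, covMatrix, Matrix.of_apply, Pi.star_apply,
      RCLike.star_def]
    rw [Finset.sum_congr rfl fun μ _ => by rw [inner μ]]
    have expand : ∀ μ, (starRingEnd ℂ) (x μ) *
        ((c : ℂ) * x μ + (c : ℂ) * (ξ : ℂ) * (starRingEnd ℂ (σ μ)) / (D : ℂ) * T)
        = (c : ℂ) * ((starRingEnd ℂ) (x μ) * x μ)
          + (c : ℂ) * (ξ : ℂ) / (D : ℂ) * T * ((starRingEnd ℂ) (x μ) * (starRingEnd ℂ) (σ μ)) :=
      fun μ => by ring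
    rw [Finset.sum_congr rfl fun μ _ => expand μ, Finset.sum_add_distrib, ← Finset.mul_sum,
      ← Finset.mul_sum, conjsum]
    have h1 : ∀ z : ℂ, (starRingEnd ℂ) z * z = (Complex.normSq z : ℂ) := fun z =>
      (Complex.normSq_eq_conj_mul_self).symm ▸ rfl
    simp_rw [fun μ => h1 (x μ)]
    rw [show (c : ℂ) * (ξ : ℂ) / (D : ℂ) * T * (starRingEnd ℂ) T
        = (c : ℂ) * (ξ : ℂ) / (D : ℂ) * ((starRingEnd ℂ) T * T) by ring, h1 T]
    push_cast
    ring
  rw [key]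
  have hNpos : 0 < ∑ μ, Complex.normSq (x μ) := by
    obtain ⟨μ, hμ⟩ := Function.ne_iff.mp hx
    exact Finset.sum_pos' (fun ν _ => Complex.normSq_nonneg _)
      ⟨μ, Finset.mem_univ μ, Complex.normSq_pos.mpr hμ⟩
  have : 0 < c * ((∑ μ, Complex.normSq (x μ)) + ξ * Complex.normSq T / D) := by
    have h2 : 0 ≤ ξ * Complex.normSq T / D :=
      div_nonneg (mul_nonneg hξ0 (Complex.normSq_nonneg _)) hD.le
    have hcpos : 0 < c := inv_pos.mpr hc
    positivity
  exact_mod_cast Complex.zero_lt_real.mpr this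
end

section
/- Let θ ∈ (0,1], c ∈ ℝ, C₀ ≥ 0 and δ > 0. Let ε denote the totally antisymmetric symbol on {0,1,2,3}^4 with ε_{0123} = 1. For each triple of indices μ,ν,σ ∈ {0,1,2,3}, suppose given real numbers R_{μνσ} and, for each ρ ∈ {0,1,2,3} and each a ∈ {1,2}, real numbers D^{(a)}_{ρ,μνσ} (playing the roles of R_{μνσ}(0,0) and ∂R_{μνσ}/∂p_{a,ρ}(0,0)), such that for all p_1, p_2 ∈ ℝ^4 with |p_1|, |p_2| ≤ δ and all μ, σ: | (c/(6π²)) Σ_{α,β} p_{1,α} p_{2,β} ε_{αβμσ} + Σ_ν p_{1,ν} ( R_{μνσ} + Σ_{ρ} p_{1,ρ} D^{(1)}_{ρ,μνσ} + Σ_{ρ} p_{2,ρ} D^{(2)}_{ρ,μνσ} ) | ≤ C₀ · max(|p_1|,|p_2|)^{2+θ}. Then: (i) R_{μνσ} = 0 for all μ,ν,σ; (ii) D^{(2)}_{β,μνσ} = -(c/(6π²)) ε_{νβμσ} for all μ,ν,σ,β; and (iii) D^{(1)}_{ρ,μνσ} + D^{(1)}_{ν,μρσ} = 0 for all μ,ν,ρ,σ.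 -/
open scoped Real

/-- The totally antisymmetric Levi-Civita symbol on `{0,1,2,3}⁴`, with `ε_{0123} = 1`. -/
noncomputable def eps4 (i j k l : Fin 4) : ℝ :=
  if h : Function.Bijective ![i, j, k, l] then
    ((Equiv.Perm.sign (Equiv.ofBijective _ h : Equiv.Perm (Fin 4)) : ℤ) : ℝ)
  else 0

private lemma vanish {θ' K t₀ X : ℝ} (hθ' : 0 < θ') (ht₀ : 0 < t₀)
    (h : ∀ t : ℝ, 0 < t → t ≤ t₀ → |X| ≤ K * t ^ θ') : X = 0 := by
  have h1 : ContinuousAt (fun t : ℝ => t ^ θ') 0 :=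
    Real.continuousAt_rpow_const 0 θ' (Or.inr hθ'.le)
  have h2 : Filter.Tendsto (fun t : ℝ => t ^ θ') (nhdsWithin (0:ℝ) (Set.Ioi 0)) (nhds (0:ℝ)) := by
    have h3 : Filter.Tendsto (fun t : ℝ => t ^ θ') (nhds (0:ℝ)) (nhds ((0:ℝ) ^ θ')) := h1.tendsto
    rw [Real.zero_rpow hθ'.ne'] at h3
    exact h3.mono_left nhdsWithin_le_nhds
  have hc : Filter.Tendsto (fun t : ℝ => K * t ^ θ') (nhdsWithin 0 (Set.Ioi 0)) (nhds 0) := by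
    simpa using h2.const_mul K
  have hev : ∀ᶠ t in nhdsWithin (0:ℝ) (Set.Ioi 0), |X| ≤ K * t ^ θ' := by
    filter_upwards [Ioc_mem_nhdsGT_of_mem (Set.mem_Ico.mpr ⟨le_refl 0, ht₀⟩)] with t ht
    exact h t ht.1 ht.2
  have : |X| ≤ 0 := ge_of_tendsto hc hev
  exact abs_nonpos_iff.mp this

private lemma rpow_split {θ t : ℝ} (ht : 0 < t) : t ^ ((2:ℝ)+θ) = t^2 * t^θ := by
  rw [Real.rpow_add ht, show ((2:ℝ)) = ((2:ℕ):ℝ) by norm_num, Real.rpow_natCast]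

private lemma quad_vanish {θ t₀ K Y : ℝ} (hθ0 : 0 < θ) (ht₀ : 0 < t₀)
    (h : ∀ t : ℝ, 0 < t → t ≤ t₀ → |t^2 * Y| ≤ K * t^((2:ℝ)+θ)) : Y = 0 := by
  refine vanish (K := K) hθ0 ht₀ (fun t ht htt => ?_)
  have h0 := h t ht htt
  rw [abs_mul, abs_of_nonneg (sq_nonneg t), rpow_split ht] at h0
  have ht2 : (0:ℝ) < t^2 := by positivity
  have : t^2 * |Y| ≤ t^2 * (K * t^θ) := by nlinarith
  exact le_of_mul_le_mul_left this ht2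

private lemma rhs_le {θ C₀ t M : ℝ} (hθ0 : 0 < θ) (hθ1 : θ ≤ 1) (hC₀ : 0 ≤ C₀)
    (ht : 0 < t) (hM0 : 0 ≤ M) (hM : M ≤ 2*t) :
    C₀ * M ^ ((2:ℝ)+θ) ≤ 8*C₀ * t ^ ((2:ℝ)+θ) := by
  have h1 : M ^ ((2:ℝ)+θ) ≤ (2*t) ^ ((2:ℝ)+θ) := Real.rpow_le_rpow hM0 hM (by linarith)
  have h2 : (2*t) ^ ((2:ℝ)+θ) = 2^((2:ℝ)+θ) * t^((2:ℝ)+θ) := Real.mul_rpow (by norm_num) ht.le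
  have h3 : (2:ℝ)^((2:ℝ)+θ) ≤ (2:ℝ)^((3:ℝ)) :=
    Real.rpow_le_rpow_of_exponent_le one_le_two (by linarith)
  have h4 : (2:ℝ)^((3:ℝ)) = 8 := by
    rw [show (3:ℝ) = ((3:ℕ):ℝ) by norm_num, Real.rpow_natCast]; norm_num
  have htp : (0:ℝ) < t ^ ((2:ℝ)+θ) := Real.rpow_pos_of_pos ht _
  have h5 : M ^ ((2:ℝ)+θ) ≤ 8 * t ^ ((2:ℝ)+θ) := by
    calc M ^ ((2:ℝ)+θ) ≤ (2*t) ^ ((2:ℝ)+θ) := h1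
    _ = 2^((2:ℝ)+θ) * t^((2:ℝ)+θ) := h2
    _ ≤ 8 * t^((2:ℝ)+θ) := by nlinarith
  nlinarith

/-- **Algebraic core of the anomaly computation.** If the Ward-identity combination
`(c/6π²) ∑ p₁ₐ p₂ᵦ ε_{αβμσ} + ∑_ν p₁ν (R_{μνσ} + ∑_ρ p₁ρ D⁽¹⁾ + ∑_ρ p₂ρ D⁽²⁾)` is
`O(max(|p₁|,|p₂|)^{2+θ})` for all small `p₁, p₂`, then `R = 0`,
`D⁽²⁾_{β,μνσ} = -(c/6π²) ε_{νβμσ}` and `D⁽¹⁾` is antisymmetric in `(ρ,ν)`. -/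
theorem anomaly_algebraic_core (θ : ℝ) (hθ0 : 0 < θ) (hθ1 : θ ≤ 1) (c : ℝ)
    (C₀ : ℝ) (hC₀ : 0 ≤ C₀) (δ : ℝ) (hδ : 0 < δ)
    (R : Fin 4 → Fin 4 → Fin 4 → ℝ)
    (D : Fin 2 → Fin 4 → Fin 4 → Fin 4 → Fin 4 → ℝ)
    (hbound : ∀ p₁ p₂ : Fin 4 → ℝ,
      Real.sqrt (∑ i : Fin 4, (p₁ i) ^ 2) ≤ δ →
      Real.sqrt (∑ i : Fin 4, (p₂ i) ^ 2) ≤ δ →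
      ∀ μ σ : Fin 4,
        |c / (6 * π ^ 2) *
            (∑ α : Fin 4, ∑ β : Fin 4, p₁ α * p₂ β * eps4 α β μ σ) +
          ∑ ν : Fin 4, p₁ ν *
            (R μ ν σ + (∑ ρ : Fin 4, p₁ ρ * D 0 ρ μ ν σ) +
              (∑ ρ : Fin 4, p₂ ρ * D 1 ρ μ ν σ))| ≤
          C₀ * (max (Real.sqrt (∑ i : Fin 4, (p₁ i) ^ 2))
                    (Real.sqrt (∑ i : Fin 4, (p₂ i) ^ 2))) ^ (2 + θ)) :
    (∀ μ ν σ : Fin 4, R μ ν σ = 0) ∧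
    (∀ μ ν σ β : Fin 4, D 1 β μ ν σ = -(c / (6 * π ^ 2)) * eps4 ν β μ σ) ∧
    (∀ μ ν ρ σ : Fin 4, D 0 ρ μ ν σ + D 0 ν μ ρ σ = 0) := by
  set c' := c / (6 * π ^ 2) with hc'
  set t₀ := min δ 1 / 2 with ht₀def
  have ht₀ : 0 < t₀ := by
    have : 0 < min δ 1 := lt_min hδ one_pos
    positivity
  have htδ : ∀ t : ℝ, 0 < t → t ≤ t₀ → 2 * t ≤ δ ∧ t ≤ 1 := by
    intro t ht htt
    constructor
    · have : 2 * t ≤ min δ 1 := by rw [ht₀def] at htt; linarith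
      exact le_trans this (min_le_left _ _)
    · have : 2 * t ≤ min δ 1 := by rw [ht₀def] at htt; linarith
      have := le_trans this (min_le_right _ _); linarith
  -- norm of a single-delta vector
  have hnorm1 : ∀ (t : ℝ) (a : Fin 4), 0 ≤ t →
      Real.sqrt (∑ i : Fin 4, ((if i = a then t else 0) : ℝ) ^ 2) = t := by
    intro t a ht
    have : (∑ i : Fin 4, ((if i = a then t else 0) : ℝ) ^ 2) = t ^ 2 := by
      simp [pow_two, ite_mul, mul_ite, mul_zero]
    rw [this, Real.sqrt_sq ht]
  have hnorm0 : Real.sqrt (∑ i : Fin 4, ((fun _ : Fin 4 => (0:ℝ)) i) ^ 2) = 0 := by simp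
  -- norm of a double-delta vector
  have hnorm2 : ∀ (t : ℝ) (a b : Fin 4), 0 ≤ t →
      Real.sqrt (∑ i : Fin 4, (((if i = a then t else 0) + (if i = b then t else 0)) : ℝ) ^ 2)
        ≤ 2 * t := by
    intro t a b ht
    have hle : (∑ i : Fin 4, (((if i = a then t else 0) + (if i = b then t else 0)) : ℝ) ^ 2)
        ≤ (2*t) ^ 2 := by
      by_cases hab : a = b
      · subst hab
        have : (∑ i : Fin 4, (((if i = a then t else 0) + (if i = a then t else 0)) : ℝ) ^ 2)
            = (2*t)^2 := by
          simp [pow_two, ite_mul, mul_ite, mul_zero, add_mul, mul_add, Finset.sum_add_distrib]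
          ring
        linarith [this.le]
      · have : (∑ i : Fin 4, (((if i = a then t else 0) + (if i = b then t else 0)) : ℝ) ^ 2)
            = 2 * t^2 := by
          simp [pow_two, ite_mul, mul_ite, mul_zero, add_mul, mul_add, Finset.sum_add_distrib,
            Finset.sum_ite_eq, hab, Ne.symm hab]
          ring
        nlinarith
    calc Real.sqrt (∑ i : Fin 4, (((if i = a then t else 0) + (if i = b then t else 0)) : ℝ) ^ 2)
        ≤ Real.sqrt ((2*t)^2) := Real.sqrt_le_sqrt hle
      _ = 2*t := Real.sqrt_sq (by linarith)
  -- Case A : p₁ = t e_ν, p₂ = 0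
  have hA : ∀ (μ ν σ : Fin 4) (t : ℝ), 0 < t → t ≤ t₀ →
      |t * R μ ν σ + t^2 * D 0 ν μ ν σ| ≤ 8*C₀ * t ^ ((2:ℝ)+θ) := by
    intro μ ν σ t ht htt
    obtain ⟨h2δ, h1⟩ := htδ t ht htt
    have hn1 := hnorm1 t ν ht.le
    have hb := hbound (fun i => if i = ν then t else 0) (fun _ => 0)
      (by rw [hn1]; linarith) (by rw [hnorm0]; linarith) μ σ
    refine le_trans (le_of_eq ?_) (le_trans hb ?_)
    · congr 1
      simp [ite_mul, mul_ite, mul_zero, zero_mul]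
      ring
    · rw [hn1, hnorm0]
      exact rhs_le hθ0 hθ1 hC₀ ht (le_max_of_le_left ht.le)
        (max_le (by linarith) (by linarith))
  -- Case B : p₁ = t(e_a + e_b), p₂ = 0
  have hB : ∀ (μ a b σ : Fin 4) (t : ℝ), 0 < t → t ≤ t₀ →
      |t * (R μ a σ + R μ b σ)
        + t^2 * (D 0 a μ a σ + D 0 b μ a σ + D 0 a μ b σ + D 0 b μ b σ)|
        ≤ 8*C₀ * t ^ ((2:ℝ)+θ) := by
    intro μ a b σ t ht htt
    obtain ⟨h2δ, h1⟩ := htδ t ht htt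
    have hn1 := hnorm2 t a b ht.le
    have hb := hbound (fun i => (if i = a then t else 0) + (if i = b then t else 0))
      (fun _ => 0) (by linarith) (by rw [hnorm0]; linarith) μ σ
    refine le_trans (le_of_eq ?_) (le_trans hb ?_)
    · congr 1
      simp [ite_mul, add_mul, mul_ite, mul_zero, zero_mul, Finset.sum_add_distrib]
      ring
    · rw [hnorm0]
      exact rhs_le hθ0 hθ1 hC₀ ht
        (le_max_of_le_left (Real.sqrt_nonneg _))
        (max_le (by linarith) (by linarith))
  -- Case C : p₁ = t e_ν, p₂ = t e_β
  have hCc : ∀ (μ ν σ β : Fin 4) (t : ℝ), 0 < t → t ≤ t₀ →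
      |t * R μ ν σ + t^2 * (c' * eps4 ν β μ σ + D 0 ν μ ν σ + D 1 β μ ν σ)|
        ≤ 8*C₀ * t ^ ((2:ℝ)+θ) := by
    intro μ ν σ β t ht htt
    obtain ⟨h2δ, h1⟩ := htδ t ht htt
    have hn1 := hnorm1 t ν ht.le
    have hn2 := hnorm1 t β ht.le
    have hb := hbound (fun i => if i = ν then t else 0) (fun i => if i = β then t else 0)
      (by rw [hn1]; linarith) (by rw [hn2]; linarith) μ σ
    refine le_trans (le_of_eq ?_) (le_trans hb ?_)
    · congr 1
      simp [ite_mul, mul_ite, mul_zero, zero_mul]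
      ring
    · rw [hn1, hn2]
      exact rhs_le hθ0 hθ1 hC₀ ht (le_max_of_le_left ht.le)
        (max_le (by linarith) (by linarith))
  -- Step 1: R = 0
  have hR : ∀ μ ν σ : Fin 4, R μ ν σ = 0 := by
    intro μ ν σ
    refine vanish (K := 8*C₀ + |D 0 ν μ ν σ|) one_pos ht₀ (fun t ht htt => ?_)
    obtain ⟨_, h1⟩ := htδ t ht htt
    have hb := hA μ ν σ t ht htt
    have habs : |t * R μ ν σ| ≤ |t * R μ ν σ + t^2 * D 0 ν μ ν σ| + |t^2 * D 0 ν μ ν σ| := by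
      have := abs_add_le (t * R μ ν σ + t^2 * D 0 ν μ ν σ) (-(t^2 * D 0 ν μ ν σ))
      simpa using this
    rw [abs_mul, abs_of_pos ht] at habs
    rw [abs_mul, abs_of_nonneg (sq_nonneg t)] at habs
    have hsplit := rpow_split (θ := θ) ht
    have htθ : t^θ ≤ 1 := Real.rpow_le_one ht.le h1 hθ0.le
    have htθ0 : 0 < t^θ := Real.rpow_pos_of_pos ht θ
    have hkey : t * |R μ ν σ| ≤ t * ((8*C₀ + |D 0 ν μ ν σ|) * t) := by
      have h8 : 8*C₀ * t ^ ((2:ℝ)+θ) ≤ 8*C₀ * t^2 := by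
        rw [hsplit]
        have h9 : t^2 * t^θ ≤ t^2 * 1 := mul_le_mul_of_nonneg_left htθ (sq_nonneg t)
        nlinarith
      linarith
    have := le_of_mul_le_mul_left hkey ht
    rwa [Real.rpow_one]
  -- Step 2: diagonal of D 0 vanishes
  have hdiag : ∀ μ ν σ : Fin 4, D 0 ν μ ν σ = 0 := by
    intro μ ν σ
    refine quad_vanish (K := 8*C₀) hθ0 ht₀ (fun t ht htt => ?_)
    have hb := hA μ ν σ t ht htt
    rwa [hR, mul_zero, zero_add] at hb
  -- Step 3: symmetrized D 0 combinations vanish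
  have hQ : ∀ μ a b σ : Fin 4, D 0 a μ a σ + D 0 b μ a σ + D 0 a μ b σ + D 0 b μ b σ = 0 := by
    intro μ a b σ
    refine quad_vanish (K := 8*C₀) hθ0 ht₀ (fun t ht htt => ?_)
    have hb := hB μ a b σ t ht htt
    rwa [hR, hR, add_zero, mul_zero, zero_add] at hb
  -- Step 4: D 1 values
  have hD1 : ∀ μ ν σ β : Fin 4, c' * eps4 ν β μ σ + D 0 ν μ ν σ + D 1 β μ ν σ = 0 := by
    intro μ ν σ β
    refine quad_vanish (K := 8*C₀) hθ0 ht₀ (fun t ht htt => ?_)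
    have hb := hCc μ ν σ β t ht htt
    rwa [hR, mul_zero, zero_add] at hb
  refine ⟨hR, ?_, ?_⟩
  · intro μ ν σ β
    have h0 := hD1 μ ν σ β
    have hd := hdiag μ ν σ
    linear_combination h0 - hd
  · intro μ ν ρ σ
    have := hQ μ ν ρ σ
    have h1 := hdiag μ ν σ
    have h2 := hdiag μ ρ σ
    linarith
end
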